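/- Let M and N be positive integers and let v_1, …, v_M : Fin N → ℂ be unit vectors. Let V be a unitary (M+1)×(M+1) complex matrix whose first column satisfies |V_{00}|² = 1/2 and |V_{j0}|² = 1/(2M) for all j ≥ 1. For each p ∈ {1,…,M} set w_0^{(p)} = −v_p and w_j^{(p)} = v_j for j ≥ 1, and define Ψ : Fin (M+1) × Fin M × Fin N → ℂ by Ψ(q,p,n) = (1/√M)·Σ_{j=0}^{M} conj(V_{jq})·V_{j0}·w_j^{(p)}(n). Then the probability of measuring outcome 0 on the first register satisfies Σ_{p,n} |Ψ(0,p,n)|² = (1/(4M))·Σ_{p=1}^{M} ‖v_p − (1/M)·Σ_{j=1}^{M} v_j‖². That is, the mean squared Euclidean distance of the v_p from their centroid equals four times this success probability. -/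

import Mathlib

/-- Intra-cluster variance circuit: the success probability of measuring `0` on the first
register equals `1/(4M)` times the sum of squared distances of the `v_p` from their centroid. -/
theorem stmt_9 (M N : ℕ) (hM : 0 < M) (hN : 0 < N)
    (v : Fin M → EuclideanSpace ℂ (Fin N)) (hv : ∀ p, ‖v p‖ = 1)
    (V : Matrix (Fin (M + 1)) (Fin (M + 1)) ℂ)
    (hV : V ∈ Matrix.unitaryGroup (Fin (M + 1)) ℂ)
    (hV00 : ‖V 0 0‖ ^ 2 = 1 / 2)
    (hVj0 : ∀ j : Fin (M + 1), j ≠ 0 → ‖V j 0‖ ^ 2 = 1 / (2 * M))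
    (w : Fin M → Fin (M + 1) → EuclideanSpace ℂ (Fin N))
    (hw0 : ∀ p, w p 0 = -(v p)) (hws : ∀ p (j : Fin M), w p j.succ = v j)
    (Ψ : EuclideanSpace ℂ (Fin (M + 1) × Fin M × Fin N))
    (hΨ : ∀ q p n, Ψ (q, p, n) =
      ((Real.sqrt M)⁻¹ : ℂ) * ∑ j, starRingEnd ℂ (V j q) * V j 0 * w p j n) :
    (∑ p, ∑ n, ‖Ψ (0, p, n)‖ ^ 2) =
      (1 / (4 * M)) * ∑ p, ‖v p - ((M : ℂ))⁻¹ • ∑ j, v j‖ ^ 2 := by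
  have hM0 : (M : ℝ) ≠ 0 := Nat.cast_ne_zero.mpr hM.ne'
  have habs : ∀ z : ℂ, (starRingEnd ℂ) z * z = ((‖z‖ ^ 2 : ℝ) : ℂ) := by
    intro z
    rw [Complex.conj_mul']; push_cast; ring
  have key : ∀ p n, ‖Ψ (0, p, n)‖ ^ 2
      = (1 / (4 * (M : ℝ))) *
        ‖(v p - ((M : ℂ))⁻¹ • ∑ j, v j) n‖ ^ 2 := by
    intro p n
    have hval : Ψ (0, p, n)
        = -(((Real.sqrt M)⁻¹ : ℂ) * (1 / 2)) * ((v p - ((M : ℂ))⁻¹ • ∑ j, v j) n) := by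
      rw [hΨ, Fin.sum_univ_succ]
      have h0 : (starRingEnd ℂ) (V 0 0) * V 0 0 * w p 0 n = (1 / 2 : ℂ) * (-(v p n)) := by
        rw [habs, hV00, hw0]
        norm_num
      have hs : ∀ j : Fin M,
          (starRingEnd ℂ) (V j.succ 0) * V j.succ 0 * w p j.succ n
          = (1 / (2 * (M : ℂ))) * v j n := by
        intro j
        rw [habs, hVj0 j.succ (Fin.succ_ne_zero j), hws]
        push_cast
        ring
      rw [h0, Finset.sum_congr rfl (fun j _ => hs j), ← Finset.mul_sum]
      have hsum : (∑ j, v j n : ℂ) = (∑ j, v j) n :=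
        by simp
      have hd : (v p - ((M : ℂ))⁻¹ • ∑ j, v j) n
          = v p n - ((M : ℂ))⁻¹ * (∑ j, v j) n := by
        simp [Pi.sub_apply, Pi.smul_apply, smul_eq_mul]
      rw [hd, ← hsum]
      have hMc : (M : ℂ) ≠ 0 := Nat.cast_ne_zero.mpr hM.ne'
      field_simp
      ring
    rw [hval, norm_mul, mul_pow, norm_neg, norm_mul, mul_pow]
    have h1 : ‖(((Real.sqrt M)⁻¹ : ℝ) : ℂ)‖ ^ 2 = (M : ℝ)⁻¹ := by
      rw [Complex.norm_real, Real.norm_of_nonneg (by positivity), inv_pow,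
        Real.sq_sqrt (by positivity)]
    have h2 : ‖(1 / 2 : ℂ)‖ ^ 2 = (1 / 4 : ℝ) := by
      have : (1 / 2 : ℂ) = (((1 : ℝ) / 2 : ℝ) : ℂ) := by norm_num
      rw [this, Complex.norm_real]
      norm_num
    push_cast at h1 ⊢
    rw [h1, h2]
    ring
  calc (∑ p, ∑ n, ‖Ψ (0, p, n)‖ ^ 2)
      = ∑ p, ∑ n, (1 / (4 * (M : ℝ))) *
        ‖(v p - ((M : ℂ))⁻¹ • ∑ j, v j) n‖ ^ 2 := by
        exact Finset.sum_congr rfl fun p _ => Finset.sum_congr rfl fun n _ => key p n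
    _ = (1 / (4 * M)) * ∑ p, ‖v p - ((M : ℂ))⁻¹ • ∑ j, v j‖ ^ 2 := by
        rw [Finset.mul_sum]
        refine Finset.sum_congr rfl fun p _ => ?_
        rw [← Finset.mul_sum]
        congr 1
        have hnn : (0 : ℝ) ≤ ∑ n, ‖(v p - ((M : ℂ))⁻¹ • ∑ j, v j) n‖ ^ 2 :=
          Finset.sum_nonneg fun _ _ => sq_nonneg _
        rw [EuclideanSpace.norm_eq, Real.sq_sqrt hnn]
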